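/- Let 0 = V_0 < V_1 < V_2 < ... enumerate all evil numbers (those whose representation over the numeration system U ends in an even number of zeros), and define W_k by R(W_k) = LR(V_k) (left shift of the representation). Then W_k − s·V_k = t·k for all k ≥ 0. -/

import Mathlib

/-- Digit conditions for the numeration system with digits `dᵢ ∈ {0, …, r}`,
`r = s + t - 1`, such that `d_{i+1} = r → dᵢ ≤ q = s - 1`. -/
def ValidRep (s t : ℕ) (d : ℕ →₀ ℕ) : Prop :=
  (∀ i, d i ≤ s + t - 1) ∧ ∀ i, d (i + 1) = s + t - 1 → d i ≤ s - 1

/-- Value of a digit string with respect to the bases `u`. -/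
def RepVal (u : ℕ → ℕ) (d : ℕ →₀ ℕ) : ℕ :=
  d.sum fun i c => c * u i

/-- `m` is evil if its (unique) representation over the numeration system with bases `u`
ends in an even number of zeros (with `0` counted as evil). -/
def Evil (s t : ℕ) (u : ℕ → ℕ) (m : ℕ) : Prop :=
  m = 0 ∨ ∃ d : ℕ →₀ ℕ, ValidRep s t d ∧ RepVal u d = m ∧
    ∃ j, Even j ∧ d j ≠ 0 ∧ ∀ i, i < j → d i = 0

namespace Stmt15

/-- the auxiliary sequence `w`, satisfying `t * w n = u (n+1) - s * u n`. -/
def w (s t : ℕ) : ℕ → ℕ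
  | 0 => 1
  | 1 => s + t - 1
  | n + 2 => (s + t - 1) * w s t (n + 1) + s * w s t n

section

variable (s t : ℕ) (u : ℕ → ℕ)

/-- Partial value of a digit function. -/
def SV (d : ℕ → ℕ) (n : ℕ) : ℕ := ∑ i ∈ Finset.range n, d i * u i

/-- Validity for digit functions. -/
def ValidF (d : ℕ → ℕ) : Prop :=
  (∀ i, d i ≤ s + t - 1) ∧ ∀ i, d (i + 1) = s + t - 1 → d i ≤ s - 1

open Classical in
/-- number of positive evil numbers `≤ m`. -/
noncomputable def H (m : ℕ) : ℕ :=
  ((Finset.Ioc 0 m).filter fun x => Evil s t u x).card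

variable {s t u}
variable (hs : 0 < s) (ht : 0 < t) (hu0 : u 0 = 1) (hu1 : u 1 = s + t)
  (hur : ∀ n, u (n + 2) = (s + t - 1) * u (n + 1) + s * u n)

section Useq
include hs ht hu0 hu1 hur

lemma upos : ∀ n, 0 < u n := by
  intro n
  induction n using Nat.strong_induction_on with
  | _ n ih =>
    match n with
    | 0 => omega
    | 1 => omega
    | (k + 2) =>
      have h1 := ih k (by omega)
      have := hur k
      nlinarith

lemma usucc : ∀ n, u n < u (n + 1) := by
  intro n
  match n with
  | 0 => show u 0 < u 1; omega
  | (k + 1) =>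
    have h1 := upos hs ht hu0 hu1 hur k
    have h2 := upos hs ht hu0 hu1 hur (k + 1)
    have := hur k
    have hr : 1 ≤ s + t - 1 := by omega
    nlinarith

lemma umono : StrictMono u := strictMono_nat_of_lt_succ (usucc hs ht hu0 hu1 hur)

lemma u_ge : ∀ n, n + 1 ≤ u n := by
  intro n
  induction n with
  | zero => omega
  | succ k ih => have := usucc hs ht hu0 hu1 hur k; omega

lemma rmul_le : ∀ n, (s + t - 1) * u n ≤ u (n + 1) := by
  intro n
  match n with
  | 0 => rw [hu0, hu1, mul_one]; omega
  | (k + 1) => rw [hur k]; exact Nat.le_add_right _ _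

lemma ukey : ∀ n, u (n + 1) = s * u n + t * w s t n := by
  intro n
  induction n using Nat.strong_induction_on with
  | _ n ih =>
    match n with
    | 0 =>
      show u 1 = s * u 0 + t * w s t 0
      simp [w, hu0, hu1]; try omega
    | 1 =>
      have h2 := hur 0
      simp only [w]
      rw [h2, hu0, hu1]
      have h3 : s + t - 1 + 1 = s + t := by omega
      nlinarith [h3]
    | (k + 2) =>
      have ih1 := ih (k + 1) (by omega)
      have ih0 := ih k (by omega)
      have h1 := hur (k + 1)
      have h2 := hur k
      simp only [w]
      zify at ih1 ih0 h1 h2 ⊢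
      linear_combination h1 + (((s + t - 1 : ℕ) : ℤ)) * ih1 + (s : ℤ) * ih0 - (s : ℤ) * h2

end Useq

lemma sv_congr {f g : ℕ → ℕ} (n : ℕ) (h : ∀ i < n, f i = g i) : SV u f n = SV u g n :=
  Finset.sum_congr rfl fun i hi => by rw [h i (Finset.mem_range.mp hi)]

lemma sv_succ (f : ℕ → ℕ) (n : ℕ) : SV u f (n + 1) = SV u f n + f n * u n :=
  Finset.sum_range_succ _ _

include hs ht hu0 hu1 hur in
/-- the fundamental bound: a valid digit string on `[0,n)` has value `< u n`. -/
lemma sv_lt {d : ℕ → ℕ} (hd : ValidF s t d) : ∀ n, SV u d n < u n := by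
  intro n
  induction n using Nat.strong_induction_on with
  | _ n ih =>
    match n with
    | 0 => simp [SV, hu0]
    | 1 =>
      have := hd.1 0
      simp only [SV, Finset.sum_range_one, hu0, hu1, mul_one]
      omega
    | (k + 2) =>
      have h1 := sv_succ (u := u) d (k + 1)
      have h1' := sv_succ (u := u) d k
      have hk1 := ih (k + 1) (by omega)
      have hk := ih k (by omega)
      have hu := hur k
      rcases eq_or_lt_of_le (hd.1 (k + 1)) with hr | hlt
      · -- top digit is r, so d k ≤ s - 1
        have hdk : d k ≤ s - 1 := hd.2 k hr
        have hb : d k * u k ≤ (s - 1) * u k := Nat.mul_le_mul_right _ hdk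
        have hsk : (s - 1) * u k + u k = s * u k := by
          have h3 : s - 1 + 1 = s := by omega
          rw [← h3, Nat.succ_mul, h3]
        rw [h1, hr, h1']
        have h4 : SV u d k + d k * u k < s * u k := by
          rw [h1'] at hk1
          linarith
        rw [hu]
        linarith
      · -- top digit ≤ r - 1
        have hb : d (k + 1) * u (k + 1) ≤ (s + t - 2) * u (k + 1) :=
          Nat.mul_le_mul_right _ (by omega)
        have hsk : (s + t - 2) * u (k + 1) + u (k + 1) ≤ (s + t - 1) * u (k + 1) := by
          have h2 : s + t - 2 + 1 = s + t - 1 := by omega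
          rw [← h2, Nat.succ_mul]
        have hp := upos hs ht hu0 hu1 hur k
        rw [h1, hu]
        have h5 : 0 < s * u k := by positivity
        linarith

lemma digit_split {a b y z U : ℕ} (hU : 0 < U) (h : a * U + y = b * U + z)
    (hy : y < U) (hz : z < U) : a = b ∧ y = z := by
  have hab : a = b := by
    rcases Nat.lt_trichotomy a b with h1 | h1 | h1
    · exfalso
      have h2 : (a + 1) * U ≤ b * U := Nat.mul_le_mul_right _ (by omega)
      have h3 : (a + 1) * U = a * U + U := by ring
      omega
    · exact h1
    · exfalso
      have h2 : (b + 1) * U ≤ a * U := Nat.mul_le_mul_right _ (by omega)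
      have h3 : (b + 1) * U = b * U + U := by ring
      omega
  subst hab
  omega

lemma term_le (d : ℕ →₀ ℕ) (i : ℕ) : d i * u i ≤ RepVal u d := by
  by_cases h : d i = 0
  · simp [h]
  · rw [RepVal, Finsupp.sum]
    exact Finset.single_le_sum (f := fun j => d j * u j) (fun j _ => Nat.zero_le _)
      (Finsupp.mem_support_iff.mpr h)

include hs ht hu0 hu1 hur in
lemma supp_bound {d : ℕ →₀ ℕ} {N : ℕ} (h : RepVal u d < u N) : ∀ i, N ≤ i → d i = 0 := by
  intro i hi
  by_contra hne
  have h1 : u i ≤ d i * u i := Nat.le_mul_of_pos_left _ (Nat.pos_of_ne_zero hne)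
  have h2 := term_le (u := u) d i
  have h3 : u N ≤ u i := (umono hs ht hu0 hu1 hur).monotone hi
  omega

lemma repval_sum (d : ℕ →₀ ℕ) (g : ℕ → ℕ) (N : ℕ) (h : ∀ i, N ≤ i → d i = 0) :
    (d.sum fun i c => c * g i) = ∑ i ∈ Finset.range N, d i * g i := by
  have hsub : d.support ⊆ Finset.range N := by
    intro i hi
    rw [Finset.mem_range]
    by_contra hc
    exact Finsupp.mem_support_iff.mp hi (h i (le_of_not_gt hc))
  exact Finsupp.sum_of_support_subset d hsub (fun i c => c * g i) (fun i _ => zero_mul _)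

lemma repval_eq_sv (d : ℕ →₀ ℕ) (N : ℕ) (h : ∀ i, N ≤ i → d i = 0) :
    RepVal u d = SV u (⇑d) N :=
  repval_sum d u N h

lemma validF_coe {d : ℕ →₀ ℕ} (h : ValidRep s t d) : ValidF s t (⇑d) := h

end

section Main

variable {s t : ℕ} {u : ℕ → ℕ}
variable (hs : 0 < s) (ht : 0 < t) (hu0 : u 0 = 1) (hu1 : u 1 = s + t)
  (hur : ∀ n, u (n + 2) = (s + t - 1) * u (n + 1) + s * u n)

include hs ht hu0 hu1 hur

/-- Adding a single high digit `c` at position `n` (above everything) to a representation. -/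
lemma evil_shift {n c y : ℕ} (hc1 : 0 < c) (hcr : c ≤ s + t - 1)
    (hy1 : 0 < y) (hyn : y < u n) (hyr : c = s + t - 1 → y < s * u (n - 1)) :
    Evil s t u (c * u n + y) ↔ Evil s t u y := by
  have hpos := upos hs ht hu0 hu1 hur
  rcases Nat.eq_zero_or_pos n with rfl | hn
  · rw [hu0] at hyn; omega
  obtain ⟨n, rfl⟩ : ∃ m, n = m + 1 := ⟨n - 1, by omega⟩
  simp only [Nat.add_sub_cancel] at hyr
  have hval_lt : c * u (n + 1) + y < u (n + 2) := by
    rw [hur n]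
    rcases eq_or_lt_of_le hcr with he | hl
    · have h2 := hyr he
      rw [he]
      omega
    · have h2 : (c + 1) * u (n + 1) ≤ (s + t - 1) * u (n + 1) :=
        Nat.mul_le_mul_right _ (by omega)
      have h3 : (c + 1) * u (n + 1) = c * u (n + 1) + u (n + 1) := by ring
      have h4 : 0 ≤ s * u n := Nat.zero_le _
      omega
  constructor
  · rintro hE
    have hm0 : c * u (n + 1) + y ≠ 0 := by omega
    obtain ⟨d, hvd, hrep, j, hj, hdj, hlow⟩ := hE.resolve_left hm0
    have hsupp : ∀ i, n + 2 ≤ i → d i = 0 :=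
      supp_bound hs ht hu0 hu1 hur (by rw [hrep]; exact hval_lt)
    have hrepsv : RepVal u d = SV u (⇑d) (n + 2) := repval_eq_sv d (n + 2) hsupp
    have hsv : SV u (⇑d) (n + 2) = SV u (⇑d) (n + 1) + d (n + 1) * u (n + 1) :=
      sv_succ _ _
    have hbd : SV u (⇑d) (n + 1) < u (n + 1) := sv_lt hs ht hu0 hu1 hur hvd (n + 1)
    have hkey : d (n + 1) = c ∧ SV u (⇑d) (n + 1) = y := by
      have : d (n + 1) * u (n + 1) + SV u (⇑d) (n + 1) = c * u (n + 1) + y := by omega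
      exact digit_split (hpos (n + 1)) this hbd hyn
    have hjlt : j < n + 1 := by
      rcases lt_trichotomy j (n + 1) with h | h | h
      · exact h
      · exfalso
        have hz : SV u (⇑d) (n + 1) = 0 :=
          Finset.sum_eq_zero fun i hi => by
            rw [hlow i (by rw [h]; exact Finset.mem_range.mp hi), zero_mul]
        omega
      · exact absurd (hsupp j (by omega)) hdj
    refine Or.inr ⟨d.erase (n + 1), ⟨?_, ?_⟩, ?_, j, hj, ?_, ?_⟩
    · intro i
      rw [Finsupp.erase_apply]
      split_ifs
      · exact Nat.zero_le _
      · exact hvd.1 i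
    · intro i hi
      rw [Finsupp.erase_apply] at hi ⊢
      split_ifs at hi ⊢ with h1 h2 h2 <;>
        first
          | omega
          | exact Nat.zero_le _
          | exact hvd.2 i hi
    · have hz : ∀ i, n + 1 ≤ i → (d.erase (n + 1)) i = 0 := by
        intro i hi
        rw [Finsupp.erase_apply]
        split_ifs with h
        · rfl
        · exact hsupp i (by omega)
      have hce : SV u (⇑(d.erase (n + 1))) (n + 1) = SV u (⇑d) (n + 1) :=
        sv_congr (u := u) (n + 1) fun i hi => by
          rw [Finsupp.erase_apply, if_neg (by omega : ¬ i = n + 1)]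
      rw [repval_eq_sv (d.erase (n + 1)) (n + 1) hz, hce]
      exact hkey.2
    · rw [Finsupp.erase_apply]
      split_ifs with h
      · omega
      · exact hdj
    · intro i hi
      rw [Finsupp.erase_apply]
      split_ifs with h
      · rfl
      · exact hlow i hi
  · rintro hE
    obtain ⟨d, hvd, hrep, j, hj, hdj, hlow⟩ := hE.resolve_left (by omega)
    have hsupp : ∀ i, n + 1 ≤ i → d i = 0 :=
      supp_bound hs ht hu0 hu1 hur (by rw [hrep]; exact hyn)
    set d' : ℕ →₀ ℕ := d + Finsupp.single (n + 1) c with hd'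
    have hco : ∀ i, d' i = if i = n + 1 then c else d i := by
      intro i
      by_cases hin : i = n + 1
      · rw [if_pos hin, hd', Finsupp.add_apply, Finsupp.single_apply, if_pos hin.symm,
          hsupp i (by omega), zero_add]
      · rw [if_neg hin, hd', Finsupp.add_apply, Finsupp.single_apply,
          if_neg (fun h => hin h.symm), add_zero]
    have hdn1 : d' (n + 1) = c := by rw [hco]; simp
    have hrepd' : RepVal u d' = c * u (n + 1) + y := by
      rw [hd', RepVal, Finsupp.sum_add_index' (h := fun i c => c * u i)
        (fun i => zero_mul _) (fun i a b => add_mul a b _),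
        Finsupp.sum_single_index (h := fun i c => c * u i) (zero_mul _)]
      rw [← RepVal, hrep]
      omega
    have hjlt : j < n + 1 := by
      by_contra h
      exact hdj (hsupp j (by omega))
    refine Or.inr ⟨d', ⟨?_, ?_⟩, hrepd', j, hj, ?_, ?_⟩
    · intro i
      rw [hco]
      split_ifs
      · exact hcr
      · exact hvd.1 i
    · intro i hi
      rw [hco] at hi
      rw [hco]
      by_cases h1 : i + 1 = n + 1
      · rw [if_pos h1] at hi
        rw [if_neg (by omega : ¬ i = n + 1)]
        have h5 := hyr hi
        have h6 := term_le (u := u) d n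
        rw [hrep] at h6
        have hin : i = n := by omega
        subst hin
        by_contra hc
        have h7 : s * u i ≤ d i * u i := Nat.mul_le_mul_right _ (by omega)
        omega
      · rw [if_neg h1] at hi
        by_cases h2 : i = n + 1
        · exfalso
          have := hsupp (i + 1) (by omega)
          omega
        · rw [if_neg h2]
          exact hvd.2 i hi
    · rw [hco]
      split_ifs with h
      · omega
      · exact hdj
    · intro i hi
      rw [hco]
      split_ifs with h
      · omega
      · exact hlow i hi

lemma evil_mul {n c : ℕ} (hc1 : 0 < c) (hcr : c ≤ s + t - 1) :
    Evil s t u (c * u n) ↔ Even n := by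
  have hpos := upos hs ht hu0 hu1 hur
  have hlt : c * u n < u (n + 1) := by
    match n with
    | 0 => rw [hu0, hu1, mul_one]; omega
    | (k + 1) =>
      have h1 : c * u (k + 1) ≤ (s + t - 1) * u (k + 1) := Nat.mul_le_mul_right _ hcr
      have h2 := hur k
      have h3 := hpos k
      nlinarith
  constructor
  · intro hE
    have hm0 : c * u n ≠ 0 := Nat.pos_iff_ne_zero.mp (Nat.mul_pos hc1 (hpos n))
    obtain ⟨d, hvd, hrep, j, hj, hdj, hlow⟩ := hE.resolve_left hm0
    have hsupp : ∀ i, n + 1 ≤ i → d i = 0 :=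
      supp_bound hs ht hu0 hu1 hur (by rw [hrep]; exact hlt)
    have hrepsv : RepVal u d = SV u (⇑d) (n + 1) := repval_eq_sv d (n + 1) hsupp
    have hsv := sv_succ (u := u) (⇑d) n
    have hbd : SV u (⇑d) n < u n := sv_lt hs ht hu0 hu1 hur hvd n
    have hkey : d n = c ∧ SV u (⇑d) n = 0 := by
      have heq : d n * u n + SV u (⇑d) n = c * u n + 0 := by linarith [hrep, hrepsv, hsv]
      exact digit_split (hpos n) heq hbd (hpos n)
    have hzero : ∀ i, i < n → d i = 0 := by
      intro i hilt
      have hz : ∑ i ∈ Finset.range n, (fun i => d i * u i) i = 0 := hkey.2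
      have h0 := (Finset.sum_eq_zero_iff).mp hz i (Finset.mem_range.mpr hilt)
      have h9 := hpos i
      rcases Nat.mul_eq_zero.mp h0 with h | h
      · exact h
      · omega
    have hjn : j = n := by
      rcases lt_trichotomy j n with h | h | h
      · exact absurd (hzero j h) hdj
      · exact h
      · exact absurd (hsupp j h) hdj
    rw [← hjn]; exact hj
  · intro hn
    refine Or.inr ⟨Finsupp.single n c, ⟨?_, ?_⟩, ?_, n, hn, ?_, ?_⟩
    · intro i
      rw [Finsupp.single_apply]
      split_ifs
      · exact hcr
      · exact Nat.zero_le _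
    · intro i hi
      rw [Finsupp.single_apply] at hi
      rw [Finsupp.single_apply]
      split_ifs at hi ⊢ <;> first | omega | simp_all | exact Nat.zero_le _
    · rw [RepVal, Finsupp.sum_single_index (h := fun i c => c * u i) (zero_mul _)]
    · rw [Finsupp.single_apply, if_pos rfl]; omega
    · intro i hi
      rw [Finsupp.single_apply, if_neg (by omega)]

open Classical in
lemma H_succ (m : ℕ) :
    H s t u (m + 1) = H s t u m + (if Evil s t u (m + 1) then 1 else 0) := by
  have hins : Finset.Ioc 0 (m + 1) = insert (m + 1) (Finset.Ioc 0 m) := by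
    ext x
    simp only [Finset.mem_Ioc, Finset.mem_insert]
    omega
  rw [H, H, hins, Finset.filter_insert]
  split_ifs with h
  · rw [Finset.card_insert_of_notMem (by simp [Finset.mem_filter, Finset.mem_Ioc])]
  · omega

open Classical in
lemma count_shift (a b : ℕ)
    (hiff : ∀ y, 0 < y → y ≤ b → (Evil s t u (a + y) ↔ Evil s t u y)) :
    ((Finset.Ioc a (a + b)).filter fun x => Evil s t u x).card = H s t u b := by
  rw [H]
  apply Finset.card_nbij' (i := fun x => x - a) (j := fun y => a + y)
  · intro x hx
    simp only [Finset.mem_coe, Finset.mem_filter, Finset.mem_Ioc] at hx ⊢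
    obtain ⟨⟨h1, h2⟩, h3⟩ := hx
    refine ⟨⟨by omega, by omega⟩, ?_⟩
    have hxa : x = a + (x - a) := by omega
    exact (hiff (x - a) (by omega) (by omega)).mp (by rw [← hxa]; exact h3)
  · intro y hy
    simp only [Finset.mem_coe, Finset.mem_filter, Finset.mem_Ioc] at hy ⊢
    obtain ⟨⟨h1, h2⟩, h3⟩ := hy
    exact ⟨⟨by omega, by omega⟩, (hiff y h1 h2).mpr h3⟩
  · intro x hx
    simp only [Finset.mem_coe, Finset.mem_filter, Finset.mem_Ioc] at hx ⊢
    omega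
  · intro y hy
    simp only [Finset.mem_coe, Finset.mem_filter, Finset.mem_Ioc] at hy ⊢
    omega

open Classical in
lemma H_add (a b : ℕ) :
    H s t u (a + b) = H s t u a
      + ((Finset.Ioc a (a + b)).filter fun x => Evil s t u x).card := by
  rw [H, H, ← Finset.card_union_of_disjoint, ← Finset.filter_union,
    Finset.Ioc_union_Ioc_eq_Ioc (Nat.zero_le a) (Nat.le_add_right a b)]
  apply Finset.disjoint_filter_filter
  rw [Finset.disjoint_left]
  intro x hx hx'
  rw [Finset.mem_Ioc] at hx hx'
  omega

open Classical in
lemma Hmul (n : ℕ) : ∀ c, c ≤ s + t - 1 →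
    H s t u (c * u n) = c * (H s t u (u n - 1) + if Even n then 1 else 0) := by
  intro c
  induction c with
  | zero => intro _; simp [H]
  | succ c ih =>
    intro hc
    have hun := upos hs ht hu0 hu1 hur n
    have h1 : (c + 1) * u n = (c * u n + (u n - 1)) + 1 := by
      rw [Nat.succ_mul]; omega
    have hend : Evil s t u ((c * u n + (u n - 1)) + 1) ↔ Even n := by
      rw [← h1]
      exact evil_mul hs ht hu0 hu1 hur (by omega) hc
    have hcs : ((Finset.Ioc (c * u n) (c * u n + (u n - 1))).filter
        fun x => Evil s t u x).card = H s t u (u n - 1) := by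
      apply count_shift hs ht hu0 hu1 hur
      intro y hy1 hy2
      rcases Nat.eq_zero_or_pos c with rfl | hcpos
      · rw [zero_mul, zero_add]
      · exact evil_shift hs ht hu0 hu1 hur hcpos (by omega) hy1 (by omega)
          (fun h => absurd h (by omega))
    rw [h1, H_succ hs ht hu0 hu1 hur, H_add hs ht hu0 hu1 hur, hcs, ih (by omega)]
    simp only [hend]
    ring

open Classical in
lemma Hblock {n c m' : ℕ} (hc : c ≤ s + t - 1) (hm : m' < u n)
    (hmr : c = s + t - 1 → m' < s * u (n - 1)) :
    H s t u (c * u n + m')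
      = c * (H s t u (u n - 1) + if Even n then 1 else 0) + H s t u m' := by
  rw [H_add hs ht hu0 hu1 hur, Hmul hs ht hu0 hu1 hur n c hc]
  congr 1
  apply count_shift hs ht hu0 hu1 hur
  intro y hy1 hy2
  rcases Nat.eq_zero_or_pos c with rfl | hcpos
  · rw [zero_mul, zero_add]
  · exact evil_shift hs ht hu0 hu1 hur hcpos hc hy1 (lt_of_le_of_lt hy2 hm)
      (fun h => lt_of_le_of_lt hy2 (hmr h))

open Classical in
lemma wkey : ∀ n, H s t u (u n - 1) + (if Even n then 1 else 0) = w s t n := by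
  intro n
  induction n using Nat.strong_induction_on with
  | _ n ih =>
    match n with
    | 0 => simp [hu0, H, w]
    | 1 =>
      have h0 : u 1 - 1 = s + t - 1 := by omega
      rw [h0]
      have hall : ∀ x ∈ Finset.Ioc 0 (s + t - 1), Evil s t u x := by
        intro x hx
        rw [Finset.mem_Ioc] at hx
        refine Or.inr ⟨Finsupp.single 0 x, ⟨?_, ?_⟩, ?_, 0, Even.zero, ?_, ?_⟩
        · intro i
          rw [Finsupp.single_apply]
          split_ifs
          · omega
          · exact Nat.zero_le _
        · intro i hi
          rw [Finsupp.single_apply] at hi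
          rw [Finsupp.single_apply]
          split_ifs at hi ⊢ <;> first | omega | simp_all | exact Nat.zero_le _
        · rw [RepVal, Finsupp.sum_single_index (h := fun i c => c * u i) (zero_mul _),
            hu0, mul_one]
        · rw [Finsupp.single_apply, if_pos rfl]; omega
        · intro i hi; omega
      rw [H, Finset.filter_true_of_mem hall, Nat.card_Ioc]
      simp [w]
    | (k + 2) =>
      have ih1 := ih (k + 1) (by omega)
      have ih0 := ih k (by omega)
      have hp0 := upos hs ht hu0 hu1 hur k
      have hp1 := upos hs ht hu0 hu1 hur (k + 1)
      have hsu : s * u k ≤ u (k + 1) :=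
        le_trans (Nat.mul_le_mul_right _ (by omega : s ≤ s + t - 1)) (rmul_le hs ht hu0 hu1 hur k)
      have hsp : 0 < s * u k := by positivity
      have e1 : u (k + 2) - 1 = (s + t - 1) * u (k + 1) + (s * u k - 1) := by
        rw [hur k, Nat.add_sub_assoc (by omega : 1 ≤ s * u k)]
      have heq2 : s * u k = (s - 1) * u k + u k := by
        have hs1 : s - 1 + 1 = s := by omega
        calc s * u k = (s - 1 + 1) * u k := by rw [hs1]
        _ = (s - 1) * u k + u k := Nat.succ_mul _ _
      have e2 : s * u k - 1 = (s - 1) * u k + (u k - 1) := by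
        rw [heq2, Nat.add_sub_assoc (by omega : 1 ≤ u k)]
      have hb1 := Hblock hs ht hu0 hu1 hur (n := k + 1) (c := s + t - 1)
        (m' := s * u k - 1) le_rfl
        (lt_of_lt_of_le (Nat.sub_lt hsp one_pos) hsu)
        (fun _ => by simpa using Nat.sub_lt hsp one_pos)
      have hb2 := Hblock hs ht hu0 hu1 hur (n := k) (c := s - 1)
        (m' := u k - 1) (by omega) (Nat.sub_lt hp0 one_pos)
        (fun h => absurd h (by omega))
      have hmm : (s - 1) * w s t k + w s t k = s * w s t k := by
        have hs1 : s - 1 + 1 = s := by omega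
        calc (s - 1) * w s t k + w s t k = (s - 1 + 1) * w s t k := (Nat.succ_mul _ _).symm
        _ = s * w s t k := by rw [hs1]
      have hpar : (if Even (k + 2) then (1 : ℕ) else 0) = if Even k then 1 else 0 := by
        simp [Nat.even_add_one]
      have hw2 : w s t (k + 2) = (s + t - 1) * w s t (k + 1) + s * w s t k := by
        simp only [w]
      rw [hw2, e1, hb1, e2, hb2, hpar, ih1]
      -- goal : (s+t-1) * w(k+1) + ((s-1) * (H (u k - 1) + e k) + H (u k - 1)) + e k = ...
      rw [ih0]
      -- now linear
      have hfin : (s - 1) * w s t k + H s t u (u k - 1) + (if Even k then 1 else 0)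
          = s * w s t k := by
        rw [add_assoc, ih0]
        exact hmm
      omega

open Classical in
lemma main_count : ∀ (N : ℕ) (f : ℕ → ℕ), ValidF s t f → (∀ i, N ≤ i → f i = 0) →
    (∑ i ∈ Finset.range N, f i * w s t i) = H s t u (SV u f N) := by
  intro N
  induction N with
  | zero =>
    intro f _ _
    simp [SV, H]
  | succ N ihN =>
    intro f hvf hz
    set f' : ℕ → ℕ := fun i => if i = N then 0 else f i with hf'
    have hvf' : ValidF s t f' := by
      constructor
      · intro i
        simp only [hf']
        split_ifs
        · exact Nat.zero_le _
        · exact hvf.1 i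
      · intro i hi
        simp only [hf'] at hi ⊢
        split_ifs at hi ⊢ <;> first | omega | exact Nat.zero_le _ | exact hvf.2 i hi
    have hz' : ∀ i, N ≤ i → f' i = 0 := by
      intro i hi
      simp only [hf']
      split_ifs with h
      · rfl
      · exact hz i (by omega)
    have hsv' : SV u f' N = SV u f N :=
      sv_congr N fun i hi => by simp only [hf']; rw [if_neg (by omega)]
    have hsum' : ∑ i ∈ Finset.range N, f' i * w s t i = ∑ i ∈ Finset.range N, f i * w s t i :=
      Finset.sum_congr rfl fun i hi => by
        simp only [hf']
        rw [if_neg (by have := Finset.mem_range.mp hi; omega)]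
    have ihf : ∑ i ∈ Finset.range N, f i * w s t i = H s t u (SV u f N) := by
      rw [← hsum', ihN f' hvf' hz', hsv']
    rw [Finset.sum_range_succ, sv_succ]
    by_cases hc : f N = 0
    · simp only [hc, zero_mul, add_zero]
      exact ihf
    · have hcle : f N ≤ s + t - 1 := hvf.1 N
      have hbd : SV u f N < u N := sv_lt hs ht hu0 hu1 hur hvf N
      have hmr : f N = s + t - 1 → SV u f N < s * u (N - 1) := by
        intro hr
        match N with
        | 0 =>
          have : SV u f 0 = 0 := rfl
          rw [this]
          have := upos hs ht hu0 hu1 hur 0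
          positivity
        | (k + 1) =>
          have hq : f k ≤ s - 1 := hvf.2 k hr
          have hb2 : SV u f k < u k := sv_lt hs ht hu0 hu1 hur hvf k
          rw [sv_succ]
          simp only [Nat.add_sub_cancel]
          have hmul : f k * u k ≤ (s - 1) * u k := Nat.mul_le_mul_right _ hq
          have h9 : (s - 1) * u k + u k = s * u k := by
            have hs1 : s - 1 + 1 = s := by omega
            calc (s - 1) * u k + u k = (s - 1 + 1) * u k := (Nat.succ_mul _ _).symm
            _ = s * u k := by rw [hs1]
          linarith
      have hbl := Hblock hs ht hu0 hu1 hur (n := N) (c := f N) (m' := SV u f N)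
        hcle hbd hmr
      rw [show SV u f N + f N * u N = f N * u N + SV u f N from Nat.add_comm _ _, hbl,
        wkey hs ht hu0 hu1 hur N, ihf]
      ring

end Main

end Stmt15

theorem stmt_15 (s t : ℕ) (hs : 0 < s) (ht : 0 < t) (u : ℕ → ℕ)
    (hu0 : u 0 = 1) (hu1 : u 1 = s + t)
    (hur : ∀ n, u (n + 2) = (s + t - 1) * u (n + 1) + s * u n)
    (V W : ℕ → ℕ) (hVmono : StrictMono V) (hV0 : V 0 = 0)
    (hVrange : ∀ m, Evil s t u m ↔ ∃ k, V k = m)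
    (hW : ∀ k, ∃ d : ℕ →₀ ℕ, ValidRep s t d ∧ RepVal u d = V k ∧
      W k = d.sum fun i c => c * u (i + 1)) :
    ∀ k, W k = s * V k + t * k := by
  intro k
  obtain ⟨d, hval, hrep, hWk⟩ := hW k
  set N := V k + 1 with hN
  have hlt : RepVal u d < u N := by
    have := Stmt15.u_ge hs ht hu0 hu1 hur N
    rw [hrep]
    omega
  have hzero : ∀ i, N ≤ i → d i = 0 := Stmt15.supp_bound hs ht hu0 hu1 hur hlt
  have h1 : W k = ∑ i ∈ Finset.range N, d i * u (i + 1) := by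
    rw [hWk]
    exact Stmt15.repval_sum d (fun i => u (i + 1)) N hzero
  have h2 := Stmt15.ukey hs ht hu0 hu1 hur
  have h3 : W k = s * (∑ i ∈ Finset.range N, d i * u i)
      + t * (∑ i ∈ Finset.range N, d i * Stmt15.w s t i) := by
    rw [h1, Finset.mul_sum, Finset.mul_sum, ← Finset.sum_add_distrib]
    exact Finset.sum_congr rfl fun i _ => by rw [h2 i]; ring
  have h4 : (∑ i ∈ Finset.range N, d i * u i) = V k := by
    rw [show (∑ i ∈ Finset.range N, d i * u i) = Stmt15.SV u (⇑d) N from rfl,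
      ← Stmt15.repval_eq_sv d N hzero, hrep]
  have h5 : (∑ i ∈ Finset.range N, d i * Stmt15.w s t i) = Stmt15.H s t u (V k) := by
    have hsv : Stmt15.SV u (⇑d) N = V k := by
      rw [← Stmt15.repval_eq_sv d N hzero, hrep]
    rw [Stmt15.main_count hs ht hu0 hu1 hur N (⇑d) hval hzero, hsv]
  have h6 : Stmt15.H s t u (V k) = k := by
    classical
    have hbij : (Finset.Icc 1 k).card
        = ((Finset.Ioc 0 (V k)).filter fun x => Evil s t u x).card := by
      apply Finset.card_bij (i := fun j _ => V j)
      · intro a ha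
        rw [Finset.mem_Icc] at ha
        simp only [Finset.mem_filter, Finset.mem_Ioc]
        refine ⟨⟨?_, ?_⟩, ?_⟩
        · calc 0 = V 0 := hV0.symm
          _ < V a := hVmono (by omega)
        · exact hVmono.le_iff_le.mpr ha.2
        · exact (hVrange (V a)).mpr ⟨a, rfl⟩
      · intro a _ b _ h
        exact hVmono.injective h
      · intro x hx
        simp only [Finset.mem_filter, Finset.mem_Ioc] at hx
        obtain ⟨⟨hx1, hx2⟩, hx3⟩ := hx
        obtain ⟨j, hj⟩ := (hVrange x).mp hx3
        refine ⟨j, Finset.mem_Icc.mpr ⟨?_, ?_⟩, hj⟩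
        · by_contra h
          have hj0 : j = 0 := by omega
          rw [hj0, hV0] at hj
          omega
        · exact hVmono.le_iff_le.mp (by rw [hj]; exact hx2)
    rw [Stmt15.H, ← hbij, Nat.card_Icc]
    omega
  rw [h3, h4, h5, h6]
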